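/- Let G be a finite simple graph on n vertices, let ρ ≥ 1 be a real number, and let φ' be a ρ-approximate MaxIS coloring of G. Then for every proper coloring φ of G, the entropies satisfy H(φ') ≤ H(φ) + log₂ ρ + log₂ e. -/

import Mathlib

open Finset

variable {V : Type*} [Fintype V] [DecidableEq V]

/-- A proper coloring of `G`: adjacent vertices receive different colors. -/
def IsProperColoring (G : SimpleGraph V) (φ : V → ℕ) : Prop :=
  ∀ v w : V, G.Adj v w → φ v ≠ φ w

/-- `c_i`: the size of the color class `i`. -/
def classSize (φ : V → ℕ) (i : ℕ) : ℕ :=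
  (Finset.univ.filter fun w => φ w = i).card

/-- `a_v`: the size of the color class containing `v`. -/
def classOfSize (φ : V → ℕ) (v : V) : ℕ := classSize φ (φ v)

/-- The generalized `p`-mean of the values `a_v` of a coloring. -/
noncomputable def colPMean (φ : V → ℕ) (p : ℝ) : ℝ :=
  ((1 / (Fintype.card V : ℝ)) * ∑ v : V, (classOfSize φ v : ℝ) ^ p) ^ (1 / p)

/-- An independent set of vertices. -/
def IsIndep (G : SimpleGraph V) (s : Finset V) : Prop :=
  ∀ v ∈ s, ∀ w ∈ s, v ≠ w → ¬G.Adj v w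

/-- A `ρ`-approximate MaxIS coloring: a proper coloring whose color classes can be ordered
`P 0, …, P (m-1)` so that each `P j` is an independent set of the graph that remains after
removing the previous classes, of size at least `1/ρ` times the independence number of the
remaining graph. -/
def IsRhoApproxMaxISColoring (G : SimpleGraph V) (ρ : ℝ) (φ : V → ℕ) : Prop :=
  IsProperColoring G φ ∧
  ∃ (m : ℕ) (P : ℕ → Finset V),
    (∀ v : V, ∃ j < m, v ∈ P j) ∧
    (∀ j < m,
      P j ⊆ Finset.univ \ (Finset.range j).biUnion P ∧
      IsIndep G (P j) ∧
      ∀ T : Finset V, T ⊆ Finset.univ \ (Finset.range j).biUnion P →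
        IsIndep G T → (T.card : ℝ) ≤ ρ * (P j).card) ∧
    (∀ j < m, ∀ v ∈ P j, (Finset.univ.filter fun w => φ w = φ v) = P j)

/-- The entropy (in bits) of a proper coloring: the entropy of the distribution obtained by
dividing the sizes of the (nonempty) color classes by `n`. -/
noncomputable def colEntropy (φ : V → ℕ) : ℝ :=
  -∑ i ∈ Finset.univ.image φ,
      ((classSize φ i : ℝ) / (Fintype.card V : ℝ)) *
        Real.logb 2 ((classSize φ i : ℝ) / (Fintype.card V : ℝ))

/-- Rank-counting lemma: if at most `k` elements of `S` have rank `≤ k` for every `k`, then the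
sum of the logs of the ranks is at least `log (|S|!)`. -/
lemma lemA {W : Type*} [DecidableEq W] : ∀ (c : ℕ) (S : Finset W) (r : W → ℕ), S.card = c →
    (∀ k : ℕ, (S.filter fun v => r v ≤ k).card ≤ k) →
    ∑ t ∈ Finset.Icc 1 c, Real.log t ≤ ∑ v ∈ S, Real.log (r v) := by
  intro c
  induction c with
  | zero => intro S r h _; simp [Finset.card_eq_zero.mp h]
  | succ c ih =>
    intro S r hcard h2
    have hne : S.Nonempty := by rw [← Finset.card_pos, hcard]; omega
    obtain ⟨v₀, hv₀, hmax⟩ := S.exists_max_image r hne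
    have hfull : S.filter (fun v => r v ≤ r v₀) = S :=
      Finset.filter_true_of_mem fun v hv => hmax v hv
    have hrv₀ : c + 1 ≤ r v₀ := by
      have := h2 (r v₀); rw [hfull, hcard] at this; exact this
    have hcard' : (S.erase v₀).card = c := by
      simp [Finset.card_erase_of_mem hv₀, hcard]
    have h2' : ∀ k : ℕ, ((S.erase v₀).filter fun v => r v ≤ k).card ≤ k := by
      intro k
      exact le_trans (Finset.card_le_card (Finset.filter_subset_filter _
        (Finset.erase_subset _ _))) (h2 k)
    have hIH := ih (S.erase v₀) r hcard' h2'
    have hsum : ∑ v ∈ S, Real.log (r v)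
        = ∑ v ∈ S.erase v₀, Real.log (r v) + Real.log (r v₀) :=
      (Finset.sum_erase_add _ _ hv₀).symm
    rw [Finset.sum_Icc_succ_top (by omega), hsum]
    have hlog : Real.log (c+1 : ℕ) ≤ Real.log (r v₀) := by
      apply Real.log_le_log (by positivity)
      exact_mod_cast hrv₀
    push_cast at hlog ⊢
    linarith

/-- `c log c ≤ log (c!) + c`. -/
lemma lemB : ∀ c : ℕ, (c : ℝ) * Real.log c ≤ (∑ t ∈ Finset.Icc 1 c, Real.log t) + c := by
  intro c
  induction c with
  | zero => simp
  | succ c ih =>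
    rw [Finset.sum_Icc_succ_top (by omega)]
    rcases Nat.eq_zero_or_pos c with hc | hc
    · subst hc; simp
    have hstep : (c : ℝ) * Real.log (c+1) ≤ (c : ℝ) * Real.log c + 1 := by
      have hc' : (0:ℝ) < c := by exact_mod_cast hc
      have h1 : Real.log ((c+1)/c) ≤ (c+1)/c - 1 :=
        Real.log_le_sub_one_of_pos (by positivity)
      rw [Real.log_div (by positivity) (by positivity)] at h1
      have h2 : (c+1)/(c:ℝ) - 1 = 1/c := by field_simp; ring
      rw [h2] at h1
      have := mul_le_mul_of_nonneg_left h1 (le_of_lt hc')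
      have h3 : (c:ℝ) * (1/c) = 1 := by field_simp
      nlinarith
    push_cast at ih ⊢
    nlinarith [hstep]

/-- Entropy as an average over vertices. -/
lemma colEntropy_eq (ψ : V → ℕ) :
    colEntropy ψ = -(∑ v : V, Real.logb 2 ((classOfSize ψ v : ℝ) / (Fintype.card V : ℝ)))
      / (Fintype.card V : ℝ) := by
  have key : ∀ i ∈ Finset.univ.image ψ,
      ∑ v ∈ Finset.univ.filter (fun v => ψ v = i),
        Real.logb 2 ((classOfSize ψ v : ℝ) / (Fintype.card V : ℝ))
      = (classSize ψ i : ℝ) * Real.logb 2 ((classSize ψ i : ℝ) / (Fintype.card V : ℝ)) := by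
    intro i _
    rw [Finset.sum_congr rfl (fun v hv => by
      rw [show classOfSize ψ v = classSize ψ i from by
        unfold classOfSize; rw [(Finset.mem_filter.mp hv).2]])]
    rw [Finset.sum_const, nsmul_eq_mul]
    rfl
  have h1 : ∑ v : V, Real.logb 2 ((classOfSize ψ v : ℝ) / (Fintype.card V : ℝ))
      = ∑ i ∈ Finset.univ.image ψ,
          (classSize ψ i : ℝ) * Real.logb 2 ((classSize ψ i : ℝ) / (Fintype.card V : ℝ)) := by
    rw [← Finset.sum_fiberwise_of_maps_to
      (fun v (_ : v ∈ Finset.univ) => Finset.mem_image_of_mem ψ (Finset.mem_univ v))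
      (fun v => Real.logb 2 ((classOfSize ψ v : ℝ) / (Fintype.card V : ℝ)))]
    exact Finset.sum_congr rfl key
  rw [h1, neg_div, Finset.sum_div]
  unfold colEntropy
  congr 1
  exact Finset.sum_congr rfl fun i _ => by ring

/-- The per-class inequality. -/
lemma class_bound (G : SimpleGraph V) (ρ : ℝ) (hρ : 1 ≤ ρ)
    (P : ℕ → Finset V) (step : V → ℕ)
    (hPv : ∀ v, v ∈ P (step v))
    (hbound : ∀ v (T : Finset V), T ⊆ Finset.univ \ (Finset.range (step v)).biUnion P →
      IsIndep G T → (T.card : ℝ) ≤ ρ * (P (step v)).card)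
    (hdisj : ∀ v w : V, step v ≤ step w → w ∉ (Finset.range (step v)).biUnion P)
    (S : Finset V) (hS : IsIndep G S) :
    (S.card : ℝ) * Real.log S.card
      ≤ (∑ v ∈ S, Real.log ((P (step v)).card)) + S.card * (Real.log ρ + 1) := by
  set r : V → ℕ := fun v => (S.filter fun w => step v ≤ step w).card with hr
  have h2 : ∀ k : ℕ, (S.filter fun v => r v ≤ k).card ≤ k := by
    intro k
    by_cases hne : (S.filter fun v => r v ≤ k).Nonempty
    · obtain ⟨v₁, hv₁, hmin⟩ := Finset.exists_min_image _ step hne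
      have hv₁k : r v₁ ≤ k := (Finset.mem_filter.mp hv₁).2
      have hsub : (S.filter fun v => r v ≤ k) ⊆ S.filter fun w => step v₁ ≤ step w := by
        intro w hw
        exact Finset.mem_filter.mpr ⟨(Finset.mem_filter.mp hw).1, hmin w hw⟩
      exact le_trans (le_trans (Finset.card_le_card hsub) le_rfl) (le_trans hv₁k le_rfl)
    · simp [Finset.not_nonempty_iff_eq_empty.mp hne]
  have hAr := lemA S.card S r rfl h2
  have hB := lemB S.card
  have hr1 : ∀ v ∈ S, 1 ≤ r v := by
    intro v hv
    have : v ∈ S.filter fun w => step v ≤ step w := Finset.mem_filter.mpr ⟨hv, le_rfl⟩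
    exact Finset.card_pos.mpr ⟨v, this⟩
  have hP1 : ∀ v : V, 1 ≤ (P (step v)).card := fun v => Finset.card_pos.mpr ⟨v, hPv v⟩
  have hrρ : ∀ v ∈ S, Real.log (r v) ≤ Real.log ρ + Real.log ((P (step v)).card) := by
    intro v hv
    have hT : ((r v : ℕ) : ℝ) ≤ ρ * (P (step v)).card := by
      apply hbound v (S.filter fun w => step v ≤ step w)
      · intro w hw
        rw [Finset.mem_sdiff]
        exact ⟨Finset.mem_univ w, hdisj v w (Finset.mem_filter.mp hw).2⟩
      · intro a ha b hb hab
        exact hS a (Finset.mem_of_mem_filter a ha) b (Finset.mem_of_mem_filter b hb) hab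
    have hrpos : (0:ℝ) < (r v : ℝ) := by exact_mod_cast hr1 v hv
    have hPpos : (0:ℝ) < ((P (step v)).card : ℝ) := by exact_mod_cast hP1 v
    calc Real.log (r v) ≤ Real.log (ρ * (P (step v)).card) := Real.log_le_log hrpos hT
      _ = Real.log ρ + Real.log ((P (step v)).card) :=
        Real.log_mul (by positivity) (ne_of_gt hPpos)
  have hsum : ∑ v ∈ S, Real.log (r v)
      ≤ (S.card : ℝ) * Real.log ρ + ∑ v ∈ S, Real.log ((P (step v)).card) := by
    calc ∑ v ∈ S, Real.log (r v)
        ≤ ∑ v ∈ S, (Real.log ρ + Real.log ((P (step v)).card)) := Finset.sum_le_sum hrρ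
      _ = (S.card : ℝ) * Real.log ρ + ∑ v ∈ S, Real.log ((P (step v)).card) := by
          rw [Finset.sum_add_distrib, Finset.sum_const, nsmul_eq_mul]
  linarith

/-- if `φ'` is a `ρ`-approximate MaxIS coloring of `G` (with `ρ ≥ 1`), then for
every proper coloring `φ` of `G`, `H(φ') ≤ H(φ) + log₂ ρ + log₂ e`. -/
theorem rhoApproxMaxIS_entropy (G : SimpleGraph V) (ρ : ℝ) (hρ : 1 ≤ ρ)
    (φ' : V → ℕ) (hφ' : IsRhoApproxMaxISColoring G ρ φ')
    (φ : V → ℕ) (hφ : IsProperColoring G φ) :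
    colEntropy φ' ≤ colEntropy φ + Real.logb 2 ρ + Real.logb 2 (Real.exp 1) := by
  classical
  obtain ⟨hp', m, P, hcov, hstep, hcls⟩ := hφ'
  have hlogbρ : 0 ≤ Real.logb 2 ρ := Real.logb_nonneg one_lt_two hρ
  have hlogbe : 0 ≤ Real.logb 2 (Real.exp 1) :=
    Real.logb_nonneg one_lt_two (by linarith [Real.add_one_le_exp (1:ℝ)])
  by_cases hV : Fintype.card V = 0
  · have hE : IsEmpty V := Fintype.card_eq_zero_iff.mp hV
    have h0 : ∀ ψ : V → ℕ, colEntropy ψ = 0 := by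
      intro ψ
      unfold colEntropy
      rw [Finset.univ_eq_empty]
      simp
    rw [h0 φ, h0 φ']
    linarith
  have hn : (0:ℝ) < (Fintype.card V : ℝ) := by
    exact_mod_cast Nat.pos_of_ne_zero hV
  -- step function
  have hex : ∀ v : V, ∃ j, j < m ∧ v ∈ P j := by
    intro v; obtain ⟨j, hj, hvj⟩ := hcov v; exact ⟨j, hj, hvj⟩
  set step : V → ℕ := fun v => Nat.find (hex v) with hstepdef
  have hmem : ∀ v, v ∈ P (step v) := fun v => (Nat.find_spec (hex v)).2
  have hlt : ∀ v, step v < m := fun v => (Nat.find_spec (hex v)).1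
  have ha' : ∀ v, classOfSize φ' v = (P (step v)).card := by
    intro v
    unfold classOfSize classSize
    rw [hcls (step v) (hlt v) v (hmem v)]
  have hdisj : ∀ v w : V, step v ≤ step w → w ∉ (Finset.range (step v)).biUnion P := by
    intro v w hle hw
    obtain ⟨i, hi, hwPi⟩ := Finset.mem_biUnion.mp hw
    have hw' := (hstep (step w) (hlt w)).1 (hmem w)
    rw [Finset.mem_sdiff] at hw'
    exact hw'.2 (Finset.mem_biUnion.mpr
      ⟨i, Finset.mem_range.mpr (lt_of_lt_of_le (Finset.mem_range.mp hi) hle), hwPi⟩)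
  have hbound : ∀ v (T : Finset V), T ⊆ Finset.univ \ (Finset.range (step v)).biUnion P →
      IsIndep G T → (T.card : ℝ) ≤ ρ * (P (step v)).card :=
    fun v => (hstep (step v) (hlt v)).2.2
  -- the key natural-log inequality
  have keyln : ∑ v : V, Real.log (classOfSize φ v)
      ≤ (∑ v : V, Real.log (classOfSize φ' v))
        + (Fintype.card V : ℝ) * (Real.log ρ + 1) := by
    have hcardsum : (Fintype.card V : ℝ)
        = ∑ i ∈ Finset.univ.image φ, ((Finset.univ.filter fun v => φ v = i).card : ℝ) := by
      rw [← Nat.cast_sum]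
      norm_cast
      rw [← Finset.card_univ]
      exact Finset.card_eq_sum_card_fiberwise
        (fun v _ => Finset.mem_image_of_mem φ (Finset.mem_univ v))
    have hfib1 : ∑ v : V, Real.log (classOfSize φ v)
        = ∑ i ∈ Finset.univ.image φ, ∑ v ∈ Finset.univ.filter (fun v => φ v = i),
            Real.log (classOfSize φ v) :=
      (Finset.sum_fiberwise_of_maps_to
        (fun v _ => Finset.mem_image_of_mem φ (Finset.mem_univ v)) _).symm
    have hfib2 : ∑ v : V, Real.log (classOfSize φ' v)
        = ∑ i ∈ Finset.univ.image φ, ∑ v ∈ Finset.univ.filter (fun v => φ v = i),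
            Real.log (classOfSize φ' v) :=
      (Finset.sum_fiberwise_of_maps_to
        (fun v _ => Finset.mem_image_of_mem φ (Finset.mem_univ v)) _).symm
    rw [hfib1, hfib2, hcardsum, Finset.sum_mul, ← Finset.sum_add_distrib]
    apply Finset.sum_le_sum
    intro i _
    set S : Finset V := Finset.univ.filter (fun v => φ v = i) with hSdef
    have hSind : IsIndep G S := by
      intro a ha b hb hab hadj
      have h1 : φ a = i := (Finset.mem_filter.mp ha).2
      have h2 : φ b = i := (Finset.mem_filter.mp hb).2
      exact hφ a b hadj (h1.trans h2.symm)
    have hclassS : ∀ v ∈ S, classOfSize φ v = S.card := by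
      intro v hv
      unfold classOfSize classSize
      rw [(Finset.mem_filter.mp hv).2]
    have hl : ∑ v ∈ S, Real.log (classOfSize φ v) = (S.card : ℝ) * Real.log S.card := by
      rw [Finset.sum_congr rfl (fun v hv => by rw [hclassS v hv])]
      rw [Finset.sum_const, nsmul_eq_mul]
    have hr : ∑ v ∈ S, Real.log (classOfSize φ' v)
        = ∑ v ∈ S, Real.log ((P (step v)).card) :=
      Finset.sum_congr rfl (fun v _ => by rw [ha' v])
    rw [hl, hr]
    exact class_bound G ρ hρ P step hmem hbound hdisj S hSind
  -- convert to logb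
  have hl2 : (0:ℝ) < Real.log 2 := Real.log_pos one_lt_two
  have key : ∑ v : V, Real.logb 2 ((classOfSize φ v : ℝ))
      ≤ (∑ v : V, Real.logb 2 ((classOfSize φ' v : ℝ)))
        + (Fintype.card V : ℝ) * (Real.logb 2 ρ + Real.logb 2 (Real.exp 1)) := by
    simp only [Real.logb, Real.log_exp, ← Finset.sum_div]
    have h3 : (Fintype.card V : ℝ) * (Real.log ρ / Real.log 2 + 1 / Real.log 2)
        = (Fintype.card V : ℝ) * (Real.log ρ + 1) / Real.log 2 := by ring
    rw [h3, ← add_div]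
    gcongr
  -- vertex class sizes are ≥ 1
  have hge1 : ∀ (ψ : V → ℕ) (v : V), 1 ≤ classOfSize ψ v := by
    intro ψ v
    apply Finset.card_pos.mpr
    exact ⟨v, Finset.mem_filter.mpr ⟨Finset.mem_univ v, rfl⟩⟩
  -- rewrite entropies
  rw [colEntropy_eq φ, colEntropy_eq φ']
  have hshift : ∀ ψ : V → ℕ,
      ∑ v : V, Real.logb 2 ((classOfSize ψ v : ℝ) / (Fintype.card V : ℝ))
      = (∑ v : V, Real.logb 2 ((classOfSize ψ v : ℝ)))
        - (Fintype.card V : ℝ) * Real.logb 2 (Fintype.card V : ℝ) := by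
    intro ψ
    rw [Finset.sum_congr rfl (fun v _ => Real.logb_div
      (by exact_mod_cast (Nat.one_le_iff_ne_zero.mp (hge1 ψ v))) (ne_of_gt hn))]
    rw [Finset.sum_sub_distrib, Finset.sum_const, Finset.card_univ, nsmul_eq_mul]
  rw [hshift φ, hshift φ']
  set A : ℝ := ∑ v : V, Real.logb 2 ((classOfSize φ v : ℝ)) with hA
  set A' : ℝ := ∑ v : V, Real.logb 2 ((classOfSize φ' v : ℝ)) with hA'
  set L : ℝ := Real.logb 2 (Fintype.card V : ℝ) with hL
  set C : ℝ := Real.logb 2 ρ + Real.logb 2 (Real.exp 1) with hC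
  have heq : -(A' - (Fintype.card V : ℝ) * L) / (Fintype.card V : ℝ)
      - (-(A - (Fintype.card V : ℝ) * L) / (Fintype.card V : ℝ))
      = (A - A') / (Fintype.card V : ℝ) := by
    field_simp
    ring
  have h4 : (A - A') / (Fintype.card V : ℝ) ≤ C := by
    rw [div_le_iff₀ hn]
    have : A ≤ A' + (Fintype.card V : ℝ) * C := key
    linarith
  linarith [heq, h4]
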